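/- arXiv:1604.05549 — 5 statements merged into one kernel-verified Lean document; each statement's English description precedes it below -/
import Mathlib

section
/- Let τ > 0, κ > 0, and let M, N be real numbers with N > |M|. For a real number ω > 0, the complex number λ = iω satisfies λ + κM + κN·exp(−λτ) = 0 if and only if ω = κ·√(N² − M²) and κτ·√(N² − M²) = arccos(−M/N) + 2πn for some nonnegative integer n. -/
open Real Complex

/-- Purely imaginary roots λ = iω (ω > 0) of λ + κM + κN·exp(−λτ) = 0, with τ > 0, κ > 0
and N > |M|, are characterized by ω = κ√(N² − M²) and
κτ√(N² − M²) = arccos(−M/N) + 2πn for some n ∈ ℕ. -/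
theorem stmt1 (τ κ M N ω : ℝ) (hτ : 0 < τ) (hκ : 0 < κ) (hN : |M| < N) (hω : 0 < ω) :
    (Complex.I * (ω : ℂ) + (κ : ℂ) * (M : ℂ) +
        (κ : ℂ) * (N : ℂ) * Complex.exp (-(Complex.I * (ω : ℂ)) * (τ : ℂ)) = 0) ↔
    (ω = κ * Real.sqrt (N ^ 2 - M ^ 2) ∧
      ∃ n : ℕ, κ * τ * Real.sqrt (N ^ 2 - M ^ 2) =
        Real.arccos (-M / N) + 2 * Real.pi * (n : ℝ)) := by
  have hN0 : 0 < N := lt_of_le_of_lt (abs_nonneg M) hN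
  have hMN : -N < M ∧ M < N := abs_lt.mp hN
  have hsub : (0:ℝ) < N ^ 2 - M ^ 2 := by nlinarith [hMN.1, hMN.2]
  set s := Real.sqrt (N ^ 2 - M ^ 2) with hs
  have hs2 : s ^ 2 = N ^ 2 - M ^ 2 := Real.sq_sqrt hsub.le
  have hspos : 0 < s := Real.sqrt_pos.mpr hsub
  have hx1 : (-1:ℝ) ≤ -M / N := by
    rw [le_div_iff₀ hN0]; linarith [hMN.2]
  have hx1' : -M / N ≤ 1 := by
    rw [div_le_one hN0]; linarith [hMN.1]
  have key : (Complex.I * (ω : ℂ) + (κ : ℂ) * (M : ℂ) +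
        (κ : ℂ) * (N : ℂ) * Complex.exp (-(Complex.I * (ω : ℂ)) * (τ : ℂ)) = 0) ↔
      (κ * M + κ * N * Real.cos (ω * τ) = 0 ∧ ω - κ * N * Real.sin (ω * τ) = 0) := by
    rw [Complex.ext_iff]
    simp [Complex.exp_re, Complex.exp_im]
    intro _
    constructor <;> intro <;> linarith
  rw [key]
  have h2π : (0:ℝ) < 2 * Real.pi := by positivity
  constructor
  · rintro ⟨h1, h2⟩
    have hpyth := Real.sin_sq_add_cos_sq (ω * τ)
    have e1 : κ * N * Real.cos (ω * τ) = -(κ * M) := by linarith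
    have e2 : κ * N * Real.sin (ω * τ) = ω := by linarith
    have e1sq : (κ * N * Real.cos (ω * τ)) ^ 2 = (κ * M) ^ 2 := by rw [e1]; ring
    have e2sq : (κ * N * Real.sin (ω * τ)) ^ 2 = ω ^ 2 := by rw [e2]
    have hω2 : ω ^ 2 = κ ^ 2 * (N ^ 2 - M ^ 2) := by
      linear_combination κ ^ 2 * N ^ 2 * hpyth - e2sq - e1sq
    have hωs : ω = κ * s := by nlinarith [mul_pos hκ hspos]
    have hsinpos : 0 < Real.sin (ω * τ) := by nlinarith [mul_pos hκ hN0]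
    have hcos : Real.cos (ω * τ) = -M / N := by
      rw [eq_div_iff hN0.ne']
      have hc : κ * (Real.cos (ω * τ) * N) = κ * (-M) := by linarith
      exact mul_left_cancel₀ hκ.ne' hc
    set θ := ω * τ with hθ
    have hθpos : 0 < θ := mul_pos hω hτ
    obtain ⟨k, hk0, hkle, hklt⟩ : ∃ k : ℤ, 0 ≤ k ∧ (k : ℝ) * (2 * Real.pi) ≤ θ ∧
        θ < ((k : ℝ) + 1) * (2 * Real.pi) := by
      refine ⟨⌊θ / (2 * Real.pi)⌋, Int.floor_nonneg.mpr (by positivity), ?_, ?_⟩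
      · calc (⌊θ / (2 * Real.pi)⌋ : ℝ) * (2 * Real.pi)
            ≤ θ / (2 * Real.pi) * (2 * Real.pi) :=
              mul_le_mul_of_nonneg_right (Int.floor_le _) h2π.le
          _ = θ := by field_simp
      · calc θ = θ / (2 * Real.pi) * (2 * Real.pi) := by field_simp
          _ < ((⌊θ / (2 * Real.pi)⌋ : ℝ) + 1) * (2 * Real.pi) :=
              mul_lt_mul_of_pos_right (Int.lt_floor_add_one _) h2π
    set θ' := θ - (k : ℝ) * (2 * Real.pi) with hθ'
    have hθ'0 : 0 ≤ θ' := by linarith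
    have hθ'2π : θ' < 2 * Real.pi := by
      have : ((k : ℝ) + 1) * (2 * Real.pi) = (k : ℝ) * (2 * Real.pi) + 2 * Real.pi := by ring
      simp only [hθ']; linarith
    have hcos' : Real.cos θ' = Real.cos θ := Real.cos_sub_int_mul_two_pi θ k
    have hsin' : Real.sin θ' = Real.sin θ := Real.sin_periodic.sub_int_mul_eq k
    have hθ'pi : θ' ≤ Real.pi := by
      by_contra h
      push_neg at h
      have h1' : 0 ≤ Real.sin (θ' - Real.pi) :=
        Real.sin_nonneg_of_nonneg_of_le_pi (by linarith) (by linarith [Real.pi_pos])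
      rw [Real.sin_sub_pi, hsin'] at h1'
      linarith
    have harccos : Real.arccos (-M / N) = θ' := by
      rw [← hcos, ← hcos', Real.arccos_cos hθ'0 hθ'pi]
    refine ⟨hωs, ⟨k.toNat, ?_⟩⟩
    have hkn : ((k.toNat : ℕ) : ℝ) = (k : ℝ) := by exact_mod_cast Int.toNat_of_nonneg hk0
    have hθs : κ * τ * s = θ := by rw [hθ, hωs]; ring
    rw [hθs, harccos, hkn]
    simp only [hθ']; ring
  · rintro ⟨hωs, n, hn⟩
    have hθeq : ω * τ = Real.arccos (-M / N) + (n : ℝ) * (2 * Real.pi) := by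
      rw [hωs, show κ * s * τ = κ * τ * s by ring, hn]; ring
    have hcos : Real.cos (ω * τ) = -M / N := by
      rw [hθeq, Real.cos_add_nat_mul_two_pi, Real.cos_arccos hx1 hx1']
    have hsin : Real.sin (ω * τ) = s / N := by
      rw [hθeq, Real.sin_add_nat_mul_two_pi, Real.sin_arccos,
        show 1 - (-M / N) ^ 2 = (N ^ 2 - M ^ 2) / N ^ 2 by field_simp,
        Real.sqrt_div hsub.le, Real.sqrt_sq hN0.le]
    constructor
    · rw [hcos]; field_simp; ring
    · rw [hsin, hωs]; field_simp; ring
end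

section
/- Let κ > 0, τ > 0, let M, N be real numbers, and let ω be a nonzero real number such that iω + κM + κN·exp(−iωτ) = 0. Then 1 − κNτ·exp(−iωτ) = 1 + κMτ + iωτ, this complex number is nonzero, and Re( −(M + N·exp(−iωτ)) / (1 − κNτ·exp(−iωτ)) ) = ω²τ / (κ·|1 + κMτ + iωτ|²) > 0. -/
open Real Complex

/-- Transversality condition: at a purely imaginary root iω (ω ≠ 0) of
λ + κM + κN·exp(−λτ) = 0, one has 1 − κNτ·exp(−iωτ) = 1 + κMτ + iωτ ≠ 0 and
Re(−(M + N·exp(−iωτ))/(1 − κNτ·exp(−iωτ))) = ω²τ/(κ·|1 + κMτ + iωτ|²) > 0. -/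
theorem stmt2 (κ τ M N ω : ℝ) (hκ : 0 < κ) (hτ : 0 < τ) (hω : ω ≠ 0)
    (h : Complex.I * (ω : ℂ) + (κ : ℂ) * (M : ℂ) +
      (κ : ℂ) * (N : ℂ) * Complex.exp (-(Complex.I * (ω : ℂ)) * (τ : ℂ)) = 0) :
    (1 - (κ : ℂ) * (N : ℂ) * (τ : ℂ) * Complex.exp (-(Complex.I * (ω : ℂ)) * (τ : ℂ)) =
        1 + (κ : ℂ) * (M : ℂ) * (τ : ℂ) + Complex.I * (ω : ℂ) * (τ : ℂ)) ∧
    (1 + (κ : ℂ) * (M : ℂ) * (τ : ℂ) + Complex.I * (ω : ℂ) * (τ : ℂ) ≠ 0) ∧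
    ((-(((M : ℂ) + (N : ℂ) * Complex.exp (-(Complex.I * (ω : ℂ)) * (τ : ℂ))) /
        (1 - (κ : ℂ) * (N : ℂ) * (τ : ℂ) *
          Complex.exp (-(Complex.I * (ω : ℂ)) * (τ : ℂ))))).re =
      ω ^ 2 * τ / (κ * ‖1 + (κ : ℂ) * (M : ℂ) * (τ : ℂ) +
        Complex.I * (ω : ℂ) * (τ : ℂ)‖ ^ 2)) ∧
    (0 < ω ^ 2 * τ / (κ * ‖1 + (κ : ℂ) * (M : ℂ) * (τ : ℂ) +
        Complex.I * (ω : ℂ) * (τ : ℂ)‖ ^ 2)) := by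
  have hκ0 : (κ:ℂ) ≠ 0 := by exact_mod_cast hκ.ne'
  have h1 : 1 - (κ : ℂ) * (N : ℂ) * (τ : ℂ) * Complex.exp (-(Complex.I * (ω : ℂ)) * (τ : ℂ)) =
      1 + (κ : ℂ) * (M : ℂ) * (τ : ℂ) + Complex.I * (ω : ℂ) * (τ : ℂ) := by
    linear_combination (-(τ:ℂ)) * h
  set D : ℂ := 1 + (κ : ℂ) * (M : ℂ) * (τ : ℂ) + Complex.I * (ω : ℂ) * (τ : ℂ) with hD
  have hDim : D.im = ω * τ := by simp [hD]
  have hDre : D.re = 1 + κ * M * τ := by simp [hD]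
  have h2 : D ≠ 0 := by
    intro h0
    have : D.im = 0 := by rw [h0]; simp
    rw [hDim] at this
    exact (mul_ne_zero hω hτ.ne') this
  have hnum : (M : ℂ) + (N : ℂ) * Complex.exp (-(Complex.I * (ω : ℂ)) * (τ : ℂ)) =
      -(Complex.I * (ω : ℂ)) / κ := by
    rw [eq_div_iff hκ0]
    linear_combination h
  have habs : ‖D‖ ^ 2 = Complex.normSq D := by
    rw [Complex.sq_norm]
  have hns : 0 < Complex.normSq D := Complex.normSq_pos.mpr h2
  refine ⟨h1, h2, ?_, ?_⟩
  · rw [hnum, h1, neg_div, neg_div, neg_neg, div_div, habs]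
    rw [Complex.div_re, Complex.normSq_mul, Complex.mul_re, Complex.mul_im]
    simp only [Complex.I_re, Complex.I_im, Complex.ofReal_re, Complex.ofReal_im,
      Complex.mul_re, Complex.mul_im, hDre, hDim, Complex.normSq_ofReal]
    have hns' : Complex.normSq D ≠ 0 := hns.ne'
    field_simp
    ring
  · apply div_pos
    · positivity
    · apply mul_pos hκ
      rw [habs]
      exact hns
end

section
/- Let α > 0, β > 0, 0 < k < 1, C > 0, τ > 0, and let B be an integer with B ≥ 1. Then there exists a unique w > 0 satisfying α·w^(k−1)·(1 − 2(w/(Cτ))^B) = β·w·(w/(Cτ))^B. Moreover this w satisfies 2(w/(Cτ))^B < 1. -/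
open Real

noncomputable def ctcpF (α β k c : ℝ) (n : ℕ) (w : ℝ) : ℝ :=
  (w / c) ^ n * (β * w ^ (2 - k) + 2 * α)

lemma ctcpF_strictMonoOn (α β k c : ℝ) (n : ℕ) (hα : 0 < α) (hβ : 0 < β)
    (hk : k < 2) (hc : 0 < c) (hn : n ≠ 0) :
    StrictMonoOn (ctcpF α β k c n) (Set.Ioi 0) := by
  intro a ha b hb hab
  have ha0 : (0:ℝ) < a := ha
  have hb0 : (0:ℝ) < b := hb
  have h1 : (a / c) ^ n < (b / c) ^ n :=
    pow_lt_pow_left₀ (by gcongr) (by positivity) hn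
  have hr : a ^ (2 - k) < b ^ (2 - k) :=
    Real.rpow_lt_rpow (le_of_lt ha0) hab (by linarith)
  have h2 : β * a ^ (2 - k) + 2 * α < β * b ^ (2 - k) + 2 * α := by nlinarith
  have hpos1 : (0:ℝ) ≤ (a / c) ^ n := by positivity
  have hpos2 : (0:ℝ) ≤ β * a ^ (2 - k) + 2 * α := by positivity
  exact mul_lt_mul'' h1 h2 hpos1 hpos2

lemma ctcpF_continuousOn (α β k c : ℝ) (n : ℕ) (hk : k < 2) (hc : 0 < c) :
    ContinuousOn (ctcpF α β k c n) (Set.Icc 0 c) := by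
  have hcont1 : Continuous (fun w : ℝ => (w / c) ^ n) := by fun_prop
  have hcont2 : ContinuousOn (fun w : ℝ => w ^ (2 - k)) (Set.Icc 0 c) := by
    intro x hx
    refine (Real.continuousAt_rpow_const x _ ?_).continuousWithinAt
    rcases eq_or_ne x 0 with h | h
    · exact Or.inr (by linarith)
    · exact Or.inl h
  exact hcont1.continuousOn.mul ((continuousOn_const.mul hcont2).add continuousOn_const)

/-- Case II equilibrium: there is a unique w > 0 with
α·w^(k−1)·(1 − 2(w/(Cτ))^B) = β·w·(w/(Cτ))^B, and this w satisfies 2(w/(Cτ))^B < 1. -/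
theorem stmt9 (α β k C τ : ℝ) (B : ℤ) (hα : 0 < α) (hβ : 0 < β)
    (hk0 : 0 < k) (hk1 : k < 1) (hC : 0 < C) (hτ : 0 < τ) (hB : 1 ≤ B) :
    (∃! w : ℝ, 0 < w ∧
      α * w ^ (k - 1) * (1 - 2 * (w / (C * τ)) ^ B) = β * w * (w / (C * τ)) ^ B) ∧
    (∀ w : ℝ, (0 < w ∧
        α * w ^ (k - 1) * (1 - 2 * (w / (C * τ)) ^ B) = β * w * (w / (C * τ)) ^ B) →
      2 * (w / (C * τ)) ^ B < 1) := by
  set c := C * τ with hcdef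
  have hc0 : 0 < c := mul_pos hC hτ
  set n := B.toNat with hndef
  have hBn : B = (n : ℤ) := (Int.toNat_of_nonneg (by linarith)).symm
  have hn0 : n ≠ 0 := by
    intro h
    rw [h] at hBn
    omega
  have hk2 : k < 2 := by linarith
  -- key equivalence
  have key : ∀ w : ℝ, 0 < w →
      ((α * w ^ (k - 1) * (1 - 2 * (w / c) ^ B) = β * w * (w / c) ^ B) ↔
        ctcpF α β k c n w = α) := by
    intro w hw
    have hK : (0:ℝ) < w ^ (k - 1) := Real.rpow_pos_of_pos hw _
    have hsplit : w = w ^ (2 - k) * w ^ (k - 1) := by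
      rw [← Real.rpow_add hw]
      norm_num
    rw [hBn, zpow_natCast]
    unfold ctcpF
    set X := (w / c) ^ n with hXdef
    set W := w ^ (2 - k) with hWdef
    set K := w ^ (k - 1) with hKdef
    clear_value X W K
    constructor
    · intro hh
      have h2 : (α * (1 - 2 * X)) * K = (β * W * X) * K := by
        linear_combination hh + (β * X) * hsplit
      have h3 := mul_right_cancel₀ hK.ne' h2
      linear_combination -h3
    · intro hh
      linear_combination (-K) * hh - (β * X) * hsplit
  -- existence
  have hf0 : ctcpF α β k c n 0 = 0 := by
    simp [ctcpF, zero_pow hn0]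
  have hfc : α < ctcpF α β k c n c := by
    unfold ctcpF
    rw [div_self hc0.ne', one_pow, one_mul]
    have : (0:ℝ) < β * c ^ (2 - k) := mul_pos hβ (Real.rpow_pos_of_pos hc0 _)
    linarith
  have hmem : α ∈ Set.Ioo (ctcpF α β k c n 0) (ctcpF α β k c n c) := by
    rw [hf0]; exact ⟨hα, hfc⟩
  obtain ⟨w, hwmem, hfw⟩ :=
    intermediate_value_Ioo hc0.le (ctcpF_continuousOn α β k c n hk2 hc0) hmem
  have hw0 : 0 < w := hwmem.1
  have hbound : ∀ w : ℝ, (0 < w ∧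
      α * w ^ (k - 1) * (1 - 2 * (w / c) ^ B) = β * w * (w / c) ^ B) →
      2 * (w / c) ^ B < 1 := by
    intro y ⟨hy, hey⟩
    have hfy : ctcpF α β k c n y = α := (key y hy).mp hey
    unfold ctcpF at hfy
    rw [hBn, zpow_natCast]
    have hX : (0:ℝ) < (y / c) ^ n := pow_pos (div_pos hy hc0) n
    have hW : (0:ℝ) < y ^ (2 - k) := Real.rpow_pos_of_pos hy _
    nlinarith [mul_pos hX (mul_pos hβ hW)]
  refine ⟨⟨w, ⟨hw0, (key w hw0).mpr hfw⟩, ?_⟩, hbound⟩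
  intro y ⟨hy, hey⟩
  have hfy : ctcpF α β k c n y = α := (key y hy).mp hey
  exact (ctcpF_strictMonoOn α β k c n hα hβ hk2 hc0 hn0).injOn hy hw0
    (by rw [hfy, hfw])
end

section
/- Let α > 0, β > 0, 0 < k < 1, C > 0, τ > 0, and let B be an integer with B ≥ 1. Then there exists a unique w > 0 satisfying α·w^(k−1)·(1 − (1 + 2^B)(w/(Cτ))^B) = β·w·(1 + 2^B)(w/(Cτ))^B. Moreover this w satisfies (1 + 2^B)(w/(Cτ))^B < 1. -/
open Real

/-- Case III equilibrium: there is a unique w > 0 with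
α·w^(k−1)·(1 − (1+2^B)(w/(Cτ))^B) = β·w·(1+2^B)(w/(Cτ))^B, and this w satisfies
(1+2^B)(w/(Cτ))^B < 1. -/
theorem stmt10 (α β k C τ : ℝ) (B : ℤ) (hα : 0 < α) (hβ : 0 < β)
    (hk0 : 0 < k) (hk1 : k < 1) (hC : 0 < C) (hτ : 0 < τ) (hB : 1 ≤ B) :
    (∃! w : ℝ, 0 < w ∧
      α * w ^ (k - 1) * (1 - (1 + (2 : ℝ) ^ B) * (w / (C * τ)) ^ B) =
        β * w * ((1 + (2 : ℝ) ^ B) * (w / (C * τ)) ^ B)) ∧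
    (∀ w : ℝ, (0 < w ∧
        α * w ^ (k - 1) * (1 - (1 + (2 : ℝ) ^ B) * (w / (C * τ)) ^ B) =
          β * w * ((1 + (2 : ℝ) ^ B) * (w / (C * τ)) ^ B)) →
      (1 + (2 : ℝ) ^ B) * (w / (C * τ)) ^ B < 1) := by
  lift B to ℕ using (by linarith : (0:ℤ) ≤ B) with n hn
  have hn1 : 1 ≤ n := by exact_mod_cast hB
  simp only [zpow_natCast]
  set c : ℝ := C * τ with hcdef
  have hc : 0 < c := mul_pos hC hτ
  set A : ℝ := 1 + (2:ℝ) ^ n with hAdef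
  have h2n : (2:ℝ) ≤ (2:ℝ) ^ n := by
    calc (2:ℝ) = 2 ^ 1 := (pow_one 2).symm
    _ ≤ 2 ^ n := pow_le_pow_right₀ (by norm_num) hn1
  have hA3 : (3:ℝ) ≤ A := by simp only [hAdef]; linarith
  have hA : 0 < A := by linarith
  set F : ℝ → ℝ := fun w => A * (w / c) ^ n * (α + β * w ^ (2 - k)) with hFdef
  -- key equivalence
  have hkey : ∀ w : ℝ, 0 < w →
      ((α * w ^ (k - 1) * (1 - A * (w / c) ^ n) = β * w * (A * (w / c) ^ n)) ↔ F w = α) := by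
    intro w hw
    have h1 : w ^ (k - 1) * w ^ ((1:ℝ) - k) = 1 := by
      rw [← rpow_add hw]; norm_num
    have h2 : w ^ ((2:ℝ) - k) = w * w ^ ((1:ℝ) - k) := by
      rw [show (2:ℝ) - k = 1 + (1 - k) by ring, rpow_add hw, rpow_one]
    constructor
    · intro hE
      have hE' := congrArg (· * w ^ ((1:ℝ) - k)) hE
      simp only [hFdef]
      linear_combination A * (w/c)^n * β * h2 - hE' + α * (1 - A * (w/c)^n) * h1
    · intro hF
      simp only [hFdef] at hF
      have hE' : α * (1 - A * (w/c)^n) = β * w ^ ((2:ℝ) - k) * (A * (w/c)^n) := by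
        linear_combination -hF
      have hE'' := congrArg (· * w ^ (k - 1)) hE'
      linear_combination hE'' + β * (A * (w/c)^n) * w ^ (k-1) * h2 + β * (A * (w/c)^n) * w * h1
  -- strict monotonicity
  have hmono : StrictMonoOn F (Set.Ici 0) := by
    intro x hx y hy hxy
    simp only [Set.mem_Ici] at hx hy
    have hy0 : 0 < y := lt_of_le_of_lt hx hxy
    have h1 : A * (x / c) ^ n < A * (y / c) ^ n := by
      apply mul_lt_mul_of_pos_left _ hA
      exact pow_lt_pow_left₀ (by gcongr) (by positivity) (by omega)
    have h2 : α + β * x ^ ((2:ℝ) - k) < α + β * y ^ ((2:ℝ) - k) := by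
      have := rpow_lt_rpow hx hxy (by linarith : (0:ℝ) < 2 - k)
      nlinarith
    have hnn1 : 0 ≤ A * (x / c) ^ n := by positivity
    have hnn2 : 0 ≤ α + β * x ^ ((2:ℝ) - k) := by
      have := rpow_nonneg hx ((2:ℝ) - k); nlinarith
    exact mul_lt_mul'' h1 h2 hnn1 hnn2
  -- continuity on Icc 0 (2c)
  have hcont : ContinuousOn F (Set.Icc 0 (2 * c)) := by
    apply ContinuousOn.mul
    · fun_prop
    · apply ContinuousOn.add continuousOn_const
      apply ContinuousOn.mul continuousOn_const
      intro x hx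
      exact (Real.continuousAt_rpow_const x _ (Or.inr (by linarith))).continuousWithinAt
  -- endpoint values
  have hF0 : F 0 = 0 := by
    simp only [hFdef]
    rw [zero_div, zero_pow (by omega : n ≠ 0)]
    ring
  have hF2c : α < F (2 * c) := by
    have ht : 0 < (2 * c) ^ ((2:ℝ) - k) := rpow_pos_of_pos (by linarith) _
    have hdiv : (2 * c) / c = 2 := by field_simp
    simp only [hFdef, hdiv]
    have h6 : (1:ℝ) ≤ A * 2 ^ n := by nlinarith
    have h7 := le_mul_of_one_le_left
      (show (0:ℝ) ≤ α + β * (2*c) ^ ((2:ℝ)-k) by positivity) h6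
    have h8 := mul_pos hβ ht
    nlinarith
  -- existence via IVT
  obtain ⟨w₀, hw₀mem, hw₀⟩ : ∃ w₀ ∈ Set.Ioo (0:ℝ) (2 * c), F w₀ = α := by
    have := intermediate_value_Ioo (by linarith : (0:ℝ) ≤ 2 * c) hcont
    have hmem : α ∈ Set.Ioo (F 0) (F (2 * c)) := by
      rw [hF0]; exact ⟨hα, hF2c⟩
    obtain ⟨w₀, hw₀mem, hw₀⟩ := this hmem
    exact ⟨w₀, hw₀mem, hw₀⟩
  have hw₀pos : 0 < w₀ := hw₀mem.1
  constructor
  · refine ⟨w₀, ⟨hw₀pos, (hkey w₀ hw₀pos).mpr hw₀⟩, ?_⟩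
    rintro w ⟨hwpos, hweq⟩
    have hFw : F w = α := (hkey w hwpos).mp hweq
    exact hmono.injOn (Set.mem_Ici.mpr hwpos.le) (Set.mem_Ici.mpr hw₀pos.le)
      (by rw [hFw, hw₀])
  · rintro w ⟨hwpos, hweq⟩
    have hFw : F w = α := (hkey w hwpos).mp hweq
    simp only [hFdef] at hFw
    have hs : 0 < w ^ ((2:ℝ) - k) := rpow_pos_of_pos hwpos _
    nlinarith [mul_pos hβ hs]
end

section
/- Let α > 0, β > 0, 0 < k < 1, C > 0, τ > 0, κ > 0, and let B be an integer with B ≥ 1. Let w* be the unique positive solution of α·w^(k−1)·(1 − (w/(Cτ))^B) = β·w·(w/(Cτ))^B, and set q* = (w*/(Cτ))^B. Assume B > (2 − k)(1 − q*). Define M = (2 − k)(1 − q*)·α·(w*)^(k−1)/τ and N = B·α·(w*)^(k−1)/τ. Then every complex root λ of λ + κM + κN·exp(−λτ) = 0 has negative real part if and only if κ·α·(w*)^(k−1)·√(B² − (k−2)²(1−q*)²) < arccos((k−2)(1−q*)/B). -/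
open Real Complex

lemma hayes_stable (a b τ : ℝ) (ha : 0 < a) (hab : a < b) (hτ : 0 < τ)
    (hineq : τ * Real.sqrt (b^2 - a^2) < Real.arccos (-a/b)) :
    ∀ z : ℂ, z + (a:ℂ) + (b:ℂ) * Complex.exp (-z * (τ:ℂ)) = 0 → z.re < 0 := by
  intro z hz
  by_contra hx
  push_neg at hx
  have hb : 0 < b := ha.trans hab
  set x := z.re with hxdef
  set y := z.im with hydef
  have hzre : (-z * (τ:ℂ)).re = -(x*τ) := by
    simp [Complex.mul_re]
    exact Or.inl rfl
  have hzim : (-z * (τ:ℂ)).im = -(y*τ) := by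
    simp [Complex.mul_im]
    exact Or.inl rfl
  have hre : x + a + b * (Real.exp (-(x*τ)) * Real.cos (y*τ)) = 0 := by
    have h := congrArg Complex.re hz
    simp only [Complex.add_re, Complex.mul_re, Complex.ofReal_re, Complex.ofReal_im,
      Complex.exp_re, Complex.exp_im, hzre, hzim, Complex.zero_re, zero_mul, sub_zero,
      mul_zero] at h
    rw [Real.cos_neg] at h
    linarith [h]
  have him : y - b * (Real.exp (-(x*τ)) * Real.sin (y*τ)) = 0 := by
    have h := congrArg Complex.im hz
    simp only [Complex.add_im, Complex.mul_im, Complex.ofReal_re, Complex.ofReal_im,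
      Complex.exp_re, Complex.exp_im, hzre, hzim, Complex.zero_im, zero_mul, add_zero,
      mul_zero] at h
    rw [Real.sin_neg] at h
    linear_combination h
  set E := b * Real.exp (-(x*τ)) with hEdef
  have hE : 0 < E := by positivity
  have hEb : E ≤ b := by
    have h1 : Real.exp (-(x*τ)) ≤ 1 := Real.exp_le_one_iff.mpr (by nlinarith)
    nlinarith
  have eq1 : x + a = -(E * Real.cos (y*τ)) := by rw [hEdef]; nlinarith [hre]
  have eq2 : y = E * Real.sin (y*τ) := by rw [hEdef]; nlinarith [him]
  have hy2 : y^2 ≤ b^2 - a^2 := by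
    have hE2 : E^2 ≤ b^2 := by nlinarith
    have h1 : (x+a)^2 = E^2 * Real.cos (y*τ)^2 := by
      linear_combination (x + a - E*Real.cos (y*τ)) * eq1
    have h2 : y^2 = E^2 * Real.sin (y*τ)^2 := by
      linear_combination (y + E*Real.sin (y*τ)) * eq2
    have h3 : E^2*(Real.sin (y*τ)^2 + Real.cos (y*τ)^2) = E^2 := by
      rw [Real.sin_sq_add_cos_sq]; ring
    have h4 : a^2 ≤ (x+a)^2 := by nlinarith
    linarith
  have hys : |y| ≤ Real.sqrt (b^2 - a^2) := by
    rw [← Real.sqrt_sq_eq_abs]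
    exact Real.sqrt_le_sqrt hy2
  set θ₀ := Real.arccos (-a/b) with hθ₀def
  have hab1 : -a/b ≤ 1 := by
    rw [neg_div]
    have : 0 ≤ a/b := by positivity
    linarith
  have hm1 : (-1:ℝ) ≤ -a/b := by
    rw [neg_div]
    have : a/b ≤ 1 := (div_le_one hb).mpr hab.le
    linarith
  have hcosθ₀ : Real.cos θ₀ = -a/b := Real.cos_arccos hm1 hab1
  have hθ₀π : θ₀ ≤ π := Real.arccos_le_pi _
  have ht : |y| * τ < θ₀ := by
    have h2 : |y| * τ ≤ τ * Real.sqrt (b^2 - a^2) := by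
      rw [mul_comm]
      exact mul_le_mul_of_nonneg_left hys hτ.le
    linarith
  have htn : 0 ≤ |y| * τ := by positivity
  have hcost : Real.cos (|y| * τ) ≤ -a/b := by
    have habs : |y| * τ = |y * τ| := by rw [abs_mul, abs_of_pos hτ]
    rw [habs, Real.cos_abs]
    rw [neg_div, le_neg]
    rw [show -Real.cos (y*τ) = (x+a)/E by field_simp; linarith [eq1]]
    rw [div_le_div_iff₀ hb hE]
    nlinarith
  have hlt := Real.cos_lt_cos_of_nonneg_of_le_pi htn hθ₀π ht
  rw [hcosθ₀] at hlt
  linarith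

lemma hayes_unstable (a b τ : ℝ) (ha : 0 < a) (hab : a < b) (hτ : 0 < τ)
    (hineq : Real.arccos (-a/b) ≤ τ * Real.sqrt (b^2 - a^2)) :
    ∃ z : ℂ, z + (a:ℂ) + (b:ℂ) * Complex.exp (-z * (τ:ℂ)) = 0 ∧ 0 ≤ z.re := by
  have hb : 0 < b := ha.trans hab
  set φ : ℝ → ℝ := fun x => (x + a) * Real.exp (x*τ) with hφdef
  have hφcont : Continuous φ := by fun_prop
  have hφ0 : φ 0 = a := by simp [hφdef]
  have hφb : b ≤ φ b := by
    have h1 : (1:ℝ) ≤ Real.exp (b*τ) := Real.one_le_exp (by positivity)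
    have h2 : b + a ≤ (b + a) * Real.exp (b*τ) := le_mul_of_one_le_right (by linarith) h1
    simp only [hφdef]
    linarith
  obtain ⟨c, hc, hφc⟩ : ∃ c ∈ Set.Icc (0:ℝ) b, φ c = b :=
    intermediate_value_Icc hb.le hφcont.continuousOn ⟨by rw [hφ0]; exact hab.le, hφb⟩
  have hφmono : ∀ x ∈ Set.Icc (0:ℝ) c, φ x ≤ b := by
    intro x hx
    rw [← hφc]
    have h1 : x + a ≤ c + a := by have := hx.2; linarith
    have h2 : Real.exp (x*τ) ≤ Real.exp (c*τ) :=
      Real.exp_le_exp.mpr (mul_le_mul_of_nonneg_right hx.2 hτ.le)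
    have h3 : (0:ℝ) ≤ x + a := by have := hx.1; linarith
    exact mul_le_mul h1 h2 (Real.exp_pos _).le (by linarith [hx.1])
  set θ : ℝ → ℝ := fun x => Real.arccos (-((x + a) * Real.exp (x*τ) / b)) with hθdef
  set h : ℝ → ℝ := fun x => b * Real.exp (-(x*τ)) * Real.sin (θ x) - θ x / τ with hhdef
  have hθcont : Continuous θ := by
    apply Real.continuous_arccos.comp
    fun_prop
  have hcont : Continuous h := by
    apply Continuous.sub
    · exact (Continuous.mul (by fun_prop) (Real.continuous_sin.comp hθcont))
    · fun_prop
  have hhc : h c < 0 := by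
    have hθc : θ c = π := by
      simp only [hθdef]
      rw [show (c + a) * Real.exp (c*τ) / b = 1 by
        rw [show (c + a) * Real.exp (c*τ) = b from hφc]; field_simp]
      exact Real.arccos_neg_one
    simp only [hhdef, hθc, Real.sin_pi, mul_zero, zero_sub]
    have : 0 < π / τ := by positivity
    linarith
  have hh0 : 0 ≤ h 0 := by
    have hθ0 : θ 0 = Real.arccos (-a/b) := by
      simp only [hθdef, zero_add, zero_mul, Real.exp_zero, mul_one, neg_div]
    have hsin : Real.sin (Real.arccos (-a/b)) = Real.sqrt (1 - (a/b)^2) := by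
      rw [Real.sin_arccos]
      congr 1
      ring
    have hkey : b * Real.sqrt (1 - (a/b)^2) = Real.sqrt (b^2 - a^2) := by
      have hbb : b^2 - a^2 = b^2 * (1 - (a/b)^2) := by field_simp
      rw [hbb, Real.sqrt_mul (by positivity), Real.sqrt_sq hb.le]
    have hval : h 0 = Real.sqrt (b^2 - a^2) - Real.arccos (-a/b) / τ := by
      simp only [hhdef, hθ0, hsin, zero_mul, neg_zero, Real.exp_zero, mul_one]
      rw [hkey]
    rw [hval, sub_nonneg, div_le_iff₀ hτ]
    linarith
  obtain ⟨x, hxmem, hhx⟩ : ∃ x ∈ Set.Icc (0:ℝ) c, h x = 0 := by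
    have := intermediate_value_Icc' hc.1 hcont.continuousOn (Set.mem_Icc.mpr ⟨hhc.le, hh0⟩)
    obtain ⟨x, hx1, hx2⟩ := this
    exact ⟨x, hx1, hx2⟩
  have hφx : (x + a) * Real.exp (x*τ) ≤ b := hφmono x hxmem
  have hφxpos : 0 < (x + a) * Real.exp (x*τ) := by
    have hx0 := hxmem.1
    exact mul_pos (by linarith) (Real.exp_pos _)
  set u : ℝ := -((x + a) * Real.exp (x*τ) / b) with hudef
  have hu1 : -1 ≤ u := by
    rw [hudef, neg_le, neg_neg, div_le_one hb]
    exact hφx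
  have hu2 : u ≤ 1 := by
    have : 0 ≤ (x + a) * Real.exp (x*τ) / b := by positivity
    rw [hudef]; linarith
  have hcosu : Real.cos (θ x) = u := by
    simp only [hθdef]
    exact Real.cos_arccos hu1 hu2
  have hsinθ : 0 ≤ Real.sin (θ x) := by
    apply Real.sin_nonneg_of_nonneg_of_le_pi
    · exact Real.arccos_nonneg _
    · exact Real.arccos_le_pi _
  refine ⟨⟨x, θ x / τ⟩, ?_, hxmem.1⟩
  have hzre : ((⟨x, θ x / τ⟩ : ℂ)).re = x := rfl
  have hzim : ((⟨x, θ x / τ⟩ : ℂ)).im = θ x / τ := rfl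
  have hmre : (-(⟨x, θ x / τ⟩ : ℂ) * (τ:ℂ)).re = -(x*τ) := by
    simp [Complex.mul_re, hzre, hzim]
  have hmim : (-(⟨x, θ x / τ⟩ : ℂ) * (τ:ℂ)).im = -(θ x) := by
    simp only [Complex.mul_im, Complex.neg_re, Complex.neg_im, Complex.ofReal_re,
      Complex.ofReal_im, hzre, hzim, mul_zero, zero_add]
    rw [neg_mul, div_mul_cancel₀ _ hτ.ne']
  apply Complex.ext
  · simp only [Complex.add_re, Complex.mul_re, Complex.ofReal_re, Complex.ofReal_im,
      Complex.exp_re, Complex.exp_im, hmre, hmim, Complex.zero_re, zero_mul, sub_zero,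
      mul_zero, hzre]
    rw [Real.cos_neg, hcosu, hudef]
    have hexp : Real.exp (-(x*τ)) * Real.exp (x*τ) = 1 := by
      rw [← Real.exp_add]; simp
    field_simp
    try exact Or.inl trivial
    linear_combination (-(x+a)) * hexp
  · simp only [Complex.add_im, Complex.mul_im, Complex.ofReal_re, Complex.ofReal_im,
      Complex.exp_re, Complex.exp_im, hmre, hmim, Complex.zero_im, zero_mul, add_zero,
      mul_zero, hzim]
    rw [Real.sin_neg]
    have hh' : b * Real.exp (-(x*τ)) * Real.sin (θ x) - θ x / τ = 0 := hhx
    linear_combination -hh'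

lemma hayes (a b τ : ℝ) (ha : 0 < a) (hab : a < b) (hτ : 0 < τ) :
    (∀ z : ℂ, z + (a:ℂ) + (b:ℂ) * Complex.exp (-z * (τ:ℂ)) = 0 → z.re < 0) ↔
      τ * Real.sqrt (b^2 - a^2) < Real.arccos (-a/b) := by
  constructor
  · intro H
    by_contra hle
    push_neg at hle
    obtain ⟨z, hz, hz0⟩ := hayes_unstable a b τ ha hab hτ hle
    exact absurd (H z hz) (not_lt.mpr hz0)
  · exact hayes_stable a b τ ha hab hτ

/-- Case I local stability criterion: with w* the (unique) positive equilibrium,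
q* = (w*/(Cτ))^B, B > (2−k)(1−q*), M = (2−k)(1−q*)·α·(w*)^(k−1)/τ and
N = B·α·(w*)^(k−1)/τ, every root of λ + κM + κN·e^{−λτ} = 0 has negative real part iff
κ·α·(w*)^(k−1)·√(B² − (k−2)²(1−q*)²) < arccos((k−2)(1−q*)/B). -/
theorem stmt11 (α β k C τ κ : ℝ) (B : ℤ) (w q M N : ℝ)
    (hα : 0 < α) (hβ : 0 < β) (hk0 : 0 < k) (hk1 : k < 1)
    (hC : 0 < C) (hτ : 0 < τ) (hκ : 0 < κ) (hB : 1 ≤ B)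
    (hw : 0 < w)
    (hweq : α * w ^ (k - 1) * (1 - (w / (C * τ)) ^ B) = β * w * (w / (C * τ)) ^ B)
    (hq : q = (w / (C * τ)) ^ B)
    (hBq : (2 - k) * (1 - q) < (B : ℝ))
    (hM : M = (2 - k) * (1 - q) * α * w ^ (k - 1) / τ)
    (hN : N = (B : ℝ) * α * w ^ (k - 1) / τ) :
    (∀ z : ℂ, z + (κ : ℂ) * (M : ℂ) + (κ : ℂ) * (N : ℂ) * Complex.exp (-z * (τ : ℂ)) = 0 →
      z.re < 0) ↔
    κ * α * w ^ (k - 1) * Real.sqrt ((B : ℝ) ^ 2 - (k - 2) ^ 2 * (1 - q) ^ 2) <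
      Real.arccos ((k - 2) * (1 - q) / (B : ℝ)) := by
  have hpow : 0 < w ^ (k - 1) := Real.rpow_pos_of_pos hw _
  have hq0 : 0 < q := by
    rw [hq]
    exact zpow_pos (div_pos hw (mul_pos hC hτ)) B
  have h1q : 0 < 1 - q := by
    have hweq' : α * w ^ (k - 1) * (1 - q) = β * w * q := by rw [hq]; exact hweq
    nlinarith [mul_pos hα hpow, mul_pos (mul_pos hβ hw) hq0]
  have hBpos : (0:ℝ) < (B:ℝ) := by exact_mod_cast hB.trans_lt' (by norm_num)
  have hM0 : 0 < M := by
    rw [hM]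
    have : 0 < (2 - k) * (1 - q) := mul_pos (by linarith) h1q
    positivity
  have hMN : M < N := by
    rw [hM, hN]
    apply div_lt_div_of_pos_right ?_ hτ
    calc (2 - k) * (1 - q) * α * w ^ (k - 1)
        = ((2 - k) * (1 - q)) * (α * w ^ (k - 1)) := by ring
      _ < (B:ℝ) * (α * w ^ (k - 1)) :=
          mul_lt_mul_of_pos_right hBq (mul_pos hα hpow)
      _ = (B:ℝ) * α * w ^ (k - 1) := by ring
  have ha : 0 < κ * M := mul_pos hκ hM0
  have hab : κ * M < κ * N := mul_lt_mul_of_pos_left hMN hκ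
  have key1 : τ * Real.sqrt ((κ*N)^2 - (κ*M)^2)
      = κ * α * w ^ (k - 1) * Real.sqrt ((B : ℝ) ^ 2 - (k - 2) ^ 2 * (1 - q) ^ 2) := by
    have hsq : (κ*N)^2 - (κ*M)^2
        = (κ * (α * w ^ (k-1) / τ))^2 * ((B : ℝ) ^ 2 - (k - 2) ^ 2 * (1 - q) ^ 2) := by
      rw [hM, hN]; field_simp; ring
    rw [hsq, Real.sqrt_mul (by positivity), Real.sqrt_sq (by positivity)]
    generalize Real.sqrt ((B : ℝ) ^ 2 - (k - 2) ^ 2 * (1 - q) ^ 2) = s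
    field_simp
  have key2 : -(κ*M) / (κ*N) = (k - 2) * (1 - q) / (B : ℝ) := by
    rw [hM, hN]
    field_simp
    try exact Or.inl trivial
    ring
  have H := hayes (κ*M) (κ*N) τ ha hab hτ
  rw [key1, key2] at H
  simpa only [Complex.ofReal_mul] using H
end
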